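/- Let A be a unital complex C*-algebra and let a ∈ A be selfadjoint. Let f : ℝ → ℂ be a bounded continuous integrable function whose Fourier transform f̂ is integrable. Then the function p ↦ f̂(p)·exp(i·p·a) is Bochner integrable from ℝ to A and f(a) = (2π)^{−1/2} · ∫_ℝ f̂(p)·exp(i·p·a) dp, where f(a) denotes the continuous functional calculus of a applied to f (using that the spectrum of a is contained in ℝ). -/

import Mathlib

open MeasureTheory

/-- The Fourier transform `f̂(p) = (2π)^{-1/2} ∫ f(x) e^{-ixp} dx` of a function `f : ℝ → ℂ`. -/
noncomputable def fourierHat (f : ℝ → ℂ) (p : ℝ) : ℂ :=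
  (Real.sqrt (2 * Real.pi) : ℂ)⁻¹ * ∫ x : ℝ, f x * Complex.exp (-(Complex.I * x * p))

open Real Complex FourierTransform in
lemma fourierHat_eq (f : ℝ → ℂ) (p : ℝ) :
    fourierHat f p = (Real.sqrt (2 * Real.pi) : ℂ)⁻¹ * 𝓕 f ((2 * Real.pi)⁻¹ * p) := by
  unfold fourierHat
  congr 1
  rw [Real.fourier_real_eq_integral_exp_smul]
  congr 1
  ext v
  have h : (-2 * Real.pi * v * ((2 * Real.pi)⁻¹ * p) : ℝ) = -(v * p) := by
    field_simp
  rw [h, smul_eq_mul, mul_comm]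
  congr 1
  push_cast
  ring_nf

lemma sqrt_two_pi_pos : (0:ℝ) < Real.sqrt (2 * Real.pi) :=
  Real.sqrt_pos.mpr (by positivity)

open Real Complex FourierTransform in
lemma fourierIntegral_integrable_of_hat (f : ℝ → ℂ) (hfhat_int : Integrable (fourierHat f)) :
    Integrable (𝓕 f) := by
  have hc : ((Real.sqrt (2 * Real.pi) : ℂ)) ≠ 0 := by
    exact_mod_cast sqrt_two_pi_pos.ne'
  have h1 : Integrable (fun p => 𝓕 f ((2 * Real.pi)⁻¹ * p)) := by
    have h := hfhat_int.const_mul (Real.sqrt (2 * Real.pi) : ℂ)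
    have he : (fun p => (Real.sqrt (2 * Real.pi) : ℂ) * fourierHat f p)
        = fun p => 𝓕 f ((2 * Real.pi)⁻¹ * p) := by
      ext p
      rw [fourierHat_eq, ← mul_assoc, mul_inv_cancel₀ hc, one_mul]
    rwa [he] at h
  have h2 := h1.comp_mul_left' (R := 2 * Real.pi) (by positivity)
  have h3 : (𝓕 f) = fun x => 𝓕 f ((2 * Real.pi)⁻¹ * (2 * Real.pi * x)) := by
    ext x; rw [inv_mul_cancel_left₀ (by positivity : (2 * Real.pi) ≠ 0)]
  rw [h3]; exact h2

open Real Complex FourierTransform in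
lemma key_inversion (f : ℝ → ℂ) (hf_cont : Continuous f) (hf_int : Integrable f)
    (hfhat_int : Integrable (fourierHat f)) (x : ℝ) :
    ∫ p : ℝ, fourierHat f p * Complex.exp (Complex.I * p * x)
      = (Real.sqrt (2 * Real.pi) : ℂ) * f x := by
  have hFi := fourierIntegral_integrable_of_hat f hfhat_int
  have hinv : 𝓕⁻ (𝓕 f) x = f x := by
    rw [hf_cont.fourierInv_fourier_eq hf_int hFi]
  set G : ℝ → ℂ := fun ξ => 𝓕 f ξ * Complex.exp (Complex.I * (2 * Real.pi * ξ * x)) with hG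
  have hGint : ∫ ξ : ℝ, G ξ = f x := by
    rw [← hinv, Real.fourierInv_eq']
    congr 1
    ext ξ
    rw [hG, smul_eq_mul, mul_comm]
    congr 2
    simp only [RCLike.inner_apply, conj_trivial]
    push_cast
    ring
  have hre : ∀ p : ℝ, fourierHat f p * Complex.exp (Complex.I * p * x)
      = (Real.sqrt (2 * Real.pi) : ℂ)⁻¹ * G ((2 * Real.pi)⁻¹ * p) := by
    intro p
    simp only [hG]
    rw [fourierHat_eq, mul_assoc]
    congr 2
    rw [show ((2:ℂ) * (Real.pi:ℂ) * ((((2 * Real.pi)⁻¹ * p : ℝ)):ℂ) * (x:ℂ)) = (p:ℂ) * (x:ℂ) by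
      push_cast; field_simp [Complex.ofReal_ne_zero.mpr Real.pi_ne_zero]]
    ring
  calc ∫ p : ℝ, fourierHat f p * Complex.exp (Complex.I * p * x)
      = ∫ p : ℝ, (Real.sqrt (2 * Real.pi) : ℂ)⁻¹ * G ((2 * Real.pi)⁻¹ * p) := by
        simp_rw [hre]
    _ = (Real.sqrt (2 * Real.pi) : ℂ)⁻¹ * ∫ p : ℝ, G ((2 * Real.pi)⁻¹ * p) :=
        integral_const_mul _ _
    _ = (Real.sqrt (2 * Real.pi) : ℂ) * f x := by
        rw [MeasureTheory.Measure.integral_comp_mul_left G ((2 * Real.pi)⁻¹), hGint]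
        rw [inv_inv, abs_of_pos (by positivity : (0:ℝ) < 2 * Real.pi)]
        rw [Complex.real_smul]
        rw [← mul_assoc]
        congr 1
        have h2 : (Real.sqrt (2 * Real.pi)) * (Real.sqrt (2 * Real.pi)) = 2 * Real.pi :=
          Real.mul_self_sqrt (by positivity)
        have hc : ((Real.sqrt (2 * Real.pi) : ℂ)) ≠ 0 := by
          exact_mod_cast sqrt_two_pi_pos.ne'
        have h4 : ((2 * Real.pi : ℝ) : ℂ)
            = (Real.sqrt (2 * Real.pi) : ℂ) * (Real.sqrt (2 * Real.pi) : ℂ) := by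
          exact_mod_cast h2.symm
        rw [h4, inv_mul_cancel_left₀ hc]

/-- The continuous map `z ↦ e^{ipz}` on the spectrum of `a`. -/
noncomputable def expCM {A : Type*} [CStarAlgebra A] (a : A) (p : ℝ) : C(spectrum ℂ a, ℂ) :=
  ⟨fun z => Complex.exp (((p:ℂ) * Complex.I) * z),
    Complex.continuous_exp.comp (by fun_prop)⟩

lemma isStarNormal_smul_of_sa {A : Type*} [CStarAlgebra A] (a : A) (p : ℝ)
    (ha : IsSelfAdjoint a) : IsStarNormal (((p:ℂ) * Complex.I) • a) := by
  constructor
  rw [star_smul, ha.star_eq]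
  exact ((Commute.refl a).smul_left _).smul_right _

lemma cfcHom_expCM {A : Type*} [CStarAlgebra A] (a : A) (p : ℝ) (ha : IsSelfAdjoint a) :
    cfcHom ha.isStarNormal (expCM a p) = NormedSpace.exp (((p : ℂ) * Complex.I) • a) := by
  have hn : IsStarNormal (((p:ℂ) * Complex.I) • a) := isStarNormal_smul_of_sa a p ha
  have h1 : cfc (fun z : ℂ => Complex.exp (((p:ℂ) * Complex.I) • z)) a
      = cfc Complex.exp ((((p:ℂ) * Complex.I)) • a) :=
    cfc_comp_smul _ _ a (Complex.continuous_exp.continuousOn) ha.isStarNormal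
  have h2 : cfc Complex.exp ((((p:ℂ) * Complex.I)) • a)
      = NormedSpace.exp (((p : ℂ) * Complex.I) • a) :=
    CFC.complex_exp_eq_normedSpace_exp hn
  rw [← h2, ← h1, cfc_apply (fun z : ℂ => Complex.exp (((p:ℂ) * Complex.I) • z)) a
    ha.isStarNormal (by fun_prop)]
  exact congrArg _ (by ext z; simp [expCM, smul_eq_mul])

lemma norm_expCM_le {A : Type*} [CStarAlgebra A] (a : A) (p : ℝ) (ha : IsSelfAdjoint a) :
    ‖expCM a p‖ ≤ 1 := by
  rw [ContinuousMap.norm_le _ zero_le_one]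
  intro z
  have hz : (z : ℂ).im = 0 := ha.im_eq_zero_of_mem_spectrum z.2
  simp only [expCM, ContinuousMap.coe_mk]
  rw [Complex.norm_exp]
  have : (((p:ℂ) * Complex.I) * z).re = 0 := by
    simp [Complex.mul_re, Complex.mul_im, hz]
  rw [this, Real.exp_zero]

lemma expCM_continuous {A : Type*} [CStarAlgebra A] (a : A) : Continuous (expCM a) := by
  have h : Continuous (fun q : ℝ × spectrum ℂ a => Complex.exp (((q.1:ℂ) * Complex.I) * q.2)) := by
    fun_prop
  exact (ContinuousMap.curry ⟨_, h⟩).continuous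

/-- **Fourier inversion through the functional calculus.** If `a` is selfadjoint
in a unital complex C*-algebra and `f : ℝ → ℂ` is a bounded continuous integrable function with
integrable Fourier transform, then `p ↦ f̂(p)·e^{ipa}` is Bochner integrable and
`f(a) = (2π)^{-1/2} ∫ f̂(p)·e^{ipa} dp`, where `f(a)` is the continuous functional calculus of
`a` applied to `f` (via the real spectrum of `a`). -/
theorem cfc_eq_fourier_integral
    {A : Type*} [CStarAlgebra A] (a : A) (ha : IsSelfAdjoint a)
    (f : ℝ → ℂ) (hf_cont : Continuous f) (hf_bdd : ∃ C : ℝ, ∀ x : ℝ, ‖f x‖ ≤ C)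
    (hf_int : Integrable f) (hfhat_int : Integrable (fourierHat f)) :
    Integrable (fun p : ℝ =>
      fourierHat f p • NormedSpace.exp (((p : ℂ) * Complex.I) • a)) ∧
    cfc (fun z : ℂ => f z.re) a
      = (Real.sqrt (2 * Real.pi))⁻¹ •
          ∫ p : ℝ, fourierHat f p • NormedSpace.exp (((p : ℂ) * Complex.I) • a) := by
  -- the continuous-map valued integrand
  set g : ℝ → C(spectrum ℂ a, ℂ) := fun p => fourierHat f p • expCM a p with hg
  have hg_meas : AEStronglyMeasurable g volume :=
    hfhat_int.aestronglyMeasurable.smul (expCM_continuous a).aestronglyMeasurable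
  have hg_int : Integrable g := by
    refine hfhat_int.norm.mono' hg_meas (Filter.Eventually.of_forall fun p => ?_)
    show ‖fourierHat f p • expCM a p‖ ≤ ‖fourierHat f p‖
    rw [ContinuousMap.norm_le _ (norm_nonneg _)]
    intro z
    rw [ContinuousMap.smul_apply, norm_smul]
    calc ‖fourierHat f p‖ * ‖expCM a p z‖ ≤ ‖fourierHat f p‖ * 1 :=
          mul_le_mul_of_nonneg_left
            ((ContinuousMap.norm_coe_le_norm (expCM a p) z).trans (norm_expCM_le a p ha))
            (norm_nonneg _)
      _ = ‖fourierHat f p‖ := mul_one _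
  -- the continuous linear map given by the functional calculus
  let φ : C(spectrum ℂ a, ℂ) →L[ℂ] A :=
    { toLinearMap := (cfcHom ha.isStarNormal (R := ℂ)).toAlgHom.toLinearMap
      cont := (cfcHom_isClosedEmbedding ha.isStarNormal).continuous }
  have hφ : ∀ h : C(spectrum ℂ a, ℂ), φ h = cfcHom ha.isStarNormal h := fun _ => rfl
  have hφg : ∀ p : ℝ, φ (g p)
      = fourierHat f p • NormedSpace.exp (((p : ℂ) * Complex.I) • a) := by
    intro p
    show φ (fourierHat f p • expCM a p) = _
    rw [_root_.map_smul, hφ, cfcHom_expCM a p ha]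
  have hint : Integrable (fun p : ℝ =>
      fourierHat f p • NormedSpace.exp (((p : ℂ) * Complex.I) • a)) := by
    have := φ.integrable_comp hg_int
    simpa only [hφg] using this
  refine ⟨hint, ?_⟩
  -- identify the integral
  have hcomm : ∫ p : ℝ, fourierHat f p • NormedSpace.exp (((p : ℂ) * Complex.I) • a)
      = φ (∫ p : ℝ, g p) := by
    rw [← φ.integral_comp_comm hg_int]
    simp only [hφg]
  rw [hcomm, ← φ.map_smul_of_tower]
  -- compute the integral of g pointwise
  have hc : ((Real.sqrt (2 * Real.pi) : ℂ)) ≠ 0 := by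
    exact_mod_cast sqrt_two_pi_pos.ne'
  have hInt_eq : (Real.sqrt (2 * Real.pi))⁻¹ • ∫ p : ℝ, g p
      = ⟨(spectrum ℂ a).restrict (fun z : ℂ => f z.re),
          ((hf_cont.comp Complex.continuous_re).continuousOn (s := spectrum ℂ a)).restrict⟩ := by
    ext z
    have hz : (z : ℂ) = ((z : ℂ).re : ℝ) := ha.mem_spectrum_eq_re z.2
    rw [ContinuousMap.smul_apply, ContinuousMap.integral_apply hg_int z]
    have hpt : ∀ p : ℝ, g p z = fourierHat f p * Complex.exp (Complex.I * p * ((z:ℂ).re : ℝ)) := by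
      intro p
      rw [hg]
      simp only [ContinuousMap.smul_apply, expCM, ContinuousMap.coe_mk, smul_eq_mul]
      congr 1
      have harg : ((p:ℂ) * Complex.I) * (z : ℂ)
          = Complex.I * (p:ℂ) * (((z:ℂ).re : ℝ) : ℂ) := by
        conv_lhs => rw [hz]
        ring
      rw [harg]
    rw [show (∫ p : ℝ, g p z) = ∫ p : ℝ, fourierHat f p *
        Complex.exp (Complex.I * p * ((z:ℂ).re : ℝ)) from by simp_rw [hpt]]
    rw [key_inversion f hf_cont hf_int hfhat_int ((z:ℂ).re)]
    change _ = f ((z:ℂ).re)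
    rw [Complex.real_smul, Complex.ofReal_inv, ← mul_assoc, inv_mul_cancel₀ hc, one_mul]
  rw [hInt_eq, hφ]
  exact (cfc_apply (fun z : ℂ => f z.re) a ha.isStarNormal
    ((hf_cont.comp Complex.continuous_re).continuousOn)).trans rfl
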